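/- For any graphs G and H, α(G)·DOM(H) ≤ DOM(G ∘ H) ≤ min{DOM(G)·n(H), DOM(H)·n(G)}, where G ∘ H is the lexicographic product. -/

import Mathlib

open SimpleGraph

variable {V : Type*}

/-- `D` is an orientation of the simple graph `G`: arcs only along edges, and each edge
gets exactly one of its two possible directions. -/
def IsOrientation (G : SimpleGraph V) (D : V → V → Prop) : Prop :=
  (∀ u v, D u v → G.Adj u v) ∧ (∀ u v, G.Adj u v → (D u v ↔ ¬ D v u))

/-- `S` is a dominating set of the digraph `D`. -/
def IsDomSet (D : V → V → Prop) (S : Finset V) : Prop :=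
  ∀ v, v ∉ S → ∃ u ∈ S, D u v

/-- Domination number of a digraph. -/
noncomputable def domNum (D : V → V → Prop) : ℕ :=
  sInf {n | ∃ S : Finset V, S.card = n ∧ IsDomSet D S}

/-- Orientable domination number of a graph. -/
noncomputable def DOM (G : SimpleGraph V) : ℕ :=
  sSup {n | ∃ D : V → V → Prop, IsOrientation G D ∧ domNum D = n}

/-- Independence number. -/
noncomputable def indepNum (G : SimpleGraph V) : ℕ :=
  sSup {n | ∃ S : Finset V, S.card = n ∧ ∀ u ∈ S, ∀ v ∈ S, ¬ G.Adj u v}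

/-- Matching number. -/
noncomputable def matchNum (G : SimpleGraph V) : ℕ :=
  sSup {n | ∃ M : Finset (Sym2 V), M.card = n ∧ (∀ e ∈ M, e ∈ G.edgeSet) ∧
    ∀ e ∈ M, ∀ f ∈ M, e ≠ f → ∀ v, v ∈ e → v ∉ f}

/-- Maximum order of a bipartite induced subgraph. -/
noncomputable def bipNum (G : SimpleGraph V) : ℕ :=
  sSup {n | ∃ s : Finset V, s.card = n ∧ (G.induce (s : Set V)).Colorable 2}

/-- Join of `G` with a single universal vertex (`none`). -/
def joinK1 (G : SimpleGraph V) : SimpleGraph (Option V) :=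
  SimpleGraph.fromRel (fun a b => a = none ∨ ∃ u v, a = some u ∧ b = some v ∧ G.Adj u v)

/-- Lexicographic product `G ∘ H`. -/
def lexProd {W : Type*} (G : SimpleGraph V) (H : SimpleGraph W) : SimpleGraph (V × W) :=
  SimpleGraph.fromRel (fun a b => G.Adj a.1 b.1 ∨ (a.1 = b.1 ∧ H.Adj a.2 b.2))

/-- Corona `G ⊙ H`: vertex `(u, none)` is the vertex `u` of `G`, the vertices `(u, some w)`
form the copy of `H` joined to `u`. -/
def corona {W : Type*} (G : SimpleGraph V) (H : SimpleGraph W) : SimpleGraph (V × Option W) :=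
  SimpleGraph.fromRel (fun a b =>
    (a.2 = none ∧ b.2 = none ∧ G.Adj a.1 b.1) ∨
    (a.1 = b.1 ∧ ∃ w w', a.2 = some w ∧ b.2 = some w' ∧ H.Adj w w') ∨
    (a.1 = b.1 ∧ a.2 = none ∧ b.2 ≠ none))

/-- A digraph is acyclic if it has no directed cycle. -/
def DigraphAcyclic (D : V → V → Prop) : Prop :=
  ¬ ∃ (m : ℕ) (c : ℕ → V), 0 < m ∧ (∀ i < m, D (c i) (c (i + 1))) ∧ c m = c 0

/-- A packing of a digraph: no arc joins two of its vertices and no vertex has two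
out-neighbors in it. -/
def IsPacking (D : V → V → Prop) (P : Finset V) : Prop :=
  (∀ u ∈ P, ∀ v ∈ P, ¬ D u v) ∧
  (∀ u ∈ P, ∀ v ∈ P, u ≠ v → ∀ w, ¬ (D w u ∧ D w v))

/-- Packing number of a digraph. -/
noncomputable def packNum (D : V → V → Prop) : ℕ :=
  sSup {n | ∃ P : Finset V, P.card = n ∧ IsPacking D P}

section Aux

lemma exists_orientation (G : SimpleGraph V) : ∃ D, IsOrientation G D := by
  classical
  refine ⟨fun u v => G.Adj u v ∧ WellOrderingRel u v, fun u v h => h.1, fun u v h => ?_⟩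
  constructor
  · rintro ⟨-, h1⟩ ⟨-, h2⟩
    exact asymm h2 h1
  · intro h1
    rcases trichotomous_of WellOrderingRel u v with h2 | h2 | h2
    · exact ⟨h, h2⟩
    · exact absurd h2 h.ne
    · exact absurd ⟨h.symm, h2⟩ h1

lemma isDomSet_univ [Fintype V] (D : V → V → Prop) : IsDomSet D (Finset.univ : Finset V) :=
  fun v hv => absurd (Finset.mem_univ v) hv

lemma domNum_le_card [Fintype V] (D : V → V → Prop) : domNum D ≤ Fintype.card V :=
  Nat.sInf_le ⟨Finset.univ, Finset.card_univ, isDomSet_univ D⟩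

lemma domNum_le_of {D : V → V → Prop} {S : Finset V} (h : IsDomSet D S) :
    domNum D ≤ S.card :=
  Nat.sInf_le ⟨S, rfl, h⟩

lemma exists_min_domSet [Fintype V] (D : V → V → Prop) :
    ∃ S : Finset V, S.card = domNum D ∧ IsDomSet D S :=
  Nat.sInf_mem (⟨Fintype.card V, Finset.univ, Finset.card_univ, isDomSet_univ D⟩ :
    {n | ∃ S : Finset V, S.card = n ∧ IsDomSet D S}.Nonempty)

lemma DOM_le [Fintype V] {G : SimpleGraph V} {k : ℕ}
    (h : ∀ D, IsOrientation G D → domNum D ≤ k) : DOM G ≤ k := by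
  apply csSup_le
  · obtain ⟨D, hD⟩ := exists_orientation G
    exact ⟨domNum D, D, hD, rfl⟩
  · rintro n ⟨D, hD, rfl⟩
    exact h D hD

lemma le_DOM [Fintype V] {G : SimpleGraph V} (D : V → V → Prop)
    (hD : IsOrientation G D) : domNum D ≤ DOM G :=
  le_csSup ⟨Fintype.card V, by rintro n ⟨D', -, rfl⟩; exact domNum_le_card D'⟩ ⟨D, hD, rfl⟩

lemma exists_DOM_orientation [Fintype V] (G : SimpleGraph V) :
    ∃ D, IsOrientation G D ∧ domNum D = DOM G := by
  have hne : {n | ∃ D : V → V → Prop, IsOrientation G D ∧ domNum D = n}.Nonempty := by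
    obtain ⟨D, hD⟩ := exists_orientation G
    exact ⟨domNum D, D, hD, rfl⟩
  have hbdd : BddAbove {n | ∃ D : V → V → Prop, IsOrientation G D ∧ domNum D = n} :=
    ⟨Fintype.card V, by rintro n ⟨D', -, rfl⟩; exact domNum_le_card D'⟩
  exact Nat.sSup_mem hne hbdd

lemma exists_max_indep [Fintype V] (G : SimpleGraph V) :
    ∃ A : Finset V, A.card = _root_.indepNum G ∧ ∀ u ∈ A, ∀ v ∈ A, ¬ G.Adj u v := by
  have hne : {n | ∃ S : Finset V, S.card = n ∧ ∀ u ∈ S, ∀ v ∈ S, ¬ G.Adj u v}.Nonempty :=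
    ⟨0, ∅, Finset.card_empty, by simp⟩
  have hbdd : BddAbove {n | ∃ S : Finset V, S.card = n ∧ ∀ u ∈ S, ∀ v ∈ S, ¬ G.Adj u v} :=
    ⟨Fintype.card V, by rintro n ⟨S, rfl, -⟩; exact Finset.card_le_univ S⟩
  exact Nat.sSup_mem hne hbdd

end Aux

theorem stmt17 {V W : Type*} [Fintype V] [Fintype W]
    (G : SimpleGraph V) (H : SimpleGraph W) :
    _root_.indepNum G * DOM H ≤ DOM (lexProd G H) ∧
    DOM (lexProd G H) ≤ min (DOM G * Fintype.card W) (DOM H * Fintype.card V) := by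
  classical
  have lexAdj : ∀ a b : V × W, (lexProd G H).Adj a b ↔
      a ≠ b ∧ ((G.Adj a.1 b.1 ∨ (a.1 = b.1 ∧ H.Adj a.2 b.2)) ∨
        (G.Adj b.1 a.1 ∨ (b.1 = a.1 ∧ H.Adj b.2 a.2))) := by
    intro a b
    simp [lexProd, SimpleGraph.fromRel_adj]
  constructor
  · -- lower bound
    obtain ⟨A, hAcard, hAind⟩ := exists_max_indep G
    obtain ⟨DH, hDH, hDHdom⟩ := exists_DOM_orientation H
    set out : V → V → Prop := fun u v =>
      (u ∈ A ∧ v ∉ A) ∨ (u ∉ A ∧ v ∉ A ∧ WellOrderingRel u v) with hout_def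
    have hout : ∀ u v, G.Adj u v → (out u v ↔ ¬ out v u) := by
      intro u v hadj
      have hnA : ¬ (u ∈ A ∧ v ∈ A) := fun ⟨h1, h2⟩ => hAind u h1 v h2 hadj
      by_cases hu : u ∈ A <;> by_cases hv : v ∈ A
      · exact absurd ⟨hu, hv⟩ hnA
      · simp [hout_def, hu, hv]
      · simp [hout_def, hu, hv]
      · have h1 : out u v ↔ WellOrderingRel u v := by simp [hout_def, hu, hv]
        have h2 : out v u ↔ WellOrderingRel v u := by simp [hout_def, hu, hv]
        rw [h1, h2]
        constructor
        · exact fun h => asymm h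
        · intro h
          rcases trichotomous_of WellOrderingRel u v with h2 | h2 | h2
          · exact h2
          · exact absurd h2 hadj.ne
          · exact absurd h2 h
    set D : V × W → V × W → Prop := fun a b =>
      (a.1 = b.1 ∧ DH a.2 b.2) ∨ (G.Adj a.1 b.1 ∧ out a.1 b.1) with hD_def
    have hDor : IsOrientation (lexProd G H) D := by
      constructor
      · rintro ⟨u, w⟩ ⟨v, w'⟩ (⟨heq, hd⟩ | ⟨hadj, -⟩)
        · have hH : H.Adj w w' := hDH.1 _ _ hd
          refine (lexAdj _ _).2 ⟨fun h => hH.ne (congrArg Prod.snd h), Or.inl (Or.inr ⟨heq, hH⟩)⟩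
        · exact (lexAdj _ _).2 ⟨fun h => hadj.ne (congrArg Prod.fst h), Or.inl (Or.inl hadj)⟩
      · rintro ⟨u, w⟩ ⟨v, w'⟩ hadj
        obtain ⟨hne, hrel⟩ := (lexAdj _ _).1 hadj
        by_cases huv : u = v
        · subst huv
          have hH : H.Adj w w' := by
            rcases hrel with (h | ⟨-, h⟩) | (h | ⟨-, h⟩)
            · exact absurd h G.irrefl
            · exact h
            · exact absurd h G.irrefl
            · exact h.symm
          have : ¬ G.Adj u u := G.irrefl
          simp only [hD_def, this, false_and, or_false, true_and]
          rw [hDH.2 w w' hH]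
        · have hG : G.Adj u v := by
            rcases hrel with (h | ⟨h, -⟩) | (h | ⟨h, -⟩)
            · exact h
            · exact absurd h huv
            · exact h.symm
            · exact absurd h.symm huv
          simp only [hD_def, huv, Ne.symm huv, false_and, false_or, hG, hG.symm, true_and]
          rw [hout u v hG]
    have key : ∀ S : Finset (V × W), IsDomSet D S → A.card * DOM H ≤ S.card := by
      intro S hS
      set T : V → Finset (V × W) := fun u => S.filter (fun p => p.1 = u) with hT_def
      have hTcard : ∀ u ∈ A, DOM H ≤ (T u).card := by
        intro u hu
        have hdom : IsDomSet DH ((T u).image Prod.snd) := by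
          intro w hw
          have hns : (u, w) ∉ S := fun hmem =>
            hw (Finset.mem_image.mpr ⟨(u, w), Finset.mem_filter.mpr ⟨hmem, rfl⟩, rfl⟩)
          obtain ⟨p, hpS, hpD⟩ := hS (u, w) hns
          rcases hpD with ⟨heq, hd⟩ | ⟨-, hout'⟩
          · exact ⟨p.2, Finset.mem_image.mpr ⟨p, Finset.mem_filter.mpr ⟨hpS, heq⟩, rfl⟩, hd⟩
          · rcases hout' with ⟨-, h⟩ | ⟨-, h, -⟩ <;> exact absurd hu h
        calc DOM H = domNum DH := hDHdom.symm
          _ ≤ ((T u).image Prod.snd).card := domNum_le_of hdom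
          _ ≤ (T u).card := Finset.card_image_le
      have h1 : A.card * DOM H ≤ ∑ u ∈ A, (T u).card := by
        have := Finset.card_nsmul_le_sum A (fun u => (T u).card) (DOM H) hTcard
        simpa [smul_eq_mul] using this
      have hdisj : ∀ u ∈ A, ∀ v ∈ A, u ≠ v → Disjoint (T u) (T v) := by
        intro u _ v _ huv
        rw [Finset.disjoint_left]
        intro p hp hq
        rw [hT_def, Finset.mem_filter] at hp hq
        exact huv (hp.2 ▸ hq.2)
      have h2 : ∑ u ∈ A, (T u).card ≤ S.card := by
        rw [← Finset.card_biUnion hdisj]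
        apply Finset.card_le_card
        intro p hp
        obtain ⟨u, -, hpu⟩ := Finset.mem_biUnion.1 hp
        exact (Finset.mem_filter.1 hpu).1
      exact h1.trans h2
    obtain ⟨S₀, hS₀card, hS₀⟩ := exists_min_domSet D
    calc _root_.indepNum G * DOM H = A.card * DOM H := by rw [hAcard]
      _ ≤ S₀.card := key S₀ hS₀
      _ = domNum D := hS₀card
      _ ≤ DOM (lexProd G H) := le_DOM D hDor
  · refine le_min ?_ ?_
    · -- DOM (G ∘ H) ≤ DOM G * |W|
      apply DOM_le
      intro D hD
      have hor : ∀ w : W, IsOrientation G (fun u v => D (u, w) (v, w)) := by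
        intro w
        constructor
        · intro u v h
          obtain ⟨hne, hrel⟩ := (lexAdj _ _).1 (hD.1 _ _ h)
          have huv : u ≠ v := fun h' => hne (by rw [h'])
          rcases hrel with (h | ⟨h, -⟩) | (h | ⟨h, -⟩)
          · exact h
          · exact absurd h huv
          · exact h.symm
          · exact absurd h.symm huv
        · intro u v h
          exact hD.2 (u, w) (v, w)
            ((lexAdj _ _).2 ⟨fun h' => h.ne (congrArg Prod.fst h'), Or.inl (Or.inl h)⟩)
      choose Sw hSwcard hSwdom using fun w => exists_min_domSet (fun u v => D (u, w) (v, w))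
      set S : Finset (V × W) :=
        Finset.univ.biUnion (fun w => (Sw w).image (fun u => (u, w))) with hS_def
      have hSdom : IsDomSet D S := by
        rintro ⟨v, w⟩ hvw
        have hv : v ∉ Sw w := fun h =>
          hvw (Finset.mem_biUnion.2 ⟨w, Finset.mem_univ w, Finset.mem_image.2 ⟨v, h, rfl⟩⟩)
        obtain ⟨u, hu, hDu⟩ := hSwdom w v hv
        exact ⟨(u, w), Finset.mem_biUnion.2 ⟨w, Finset.mem_univ w,
          Finset.mem_image.2 ⟨u, hu, rfl⟩⟩, hDu⟩
      calc domNum D ≤ S.card := domNum_le_of hSdom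
        _ ≤ ∑ w : W, ((Sw w).image (fun u => (u, w))).card := Finset.card_biUnion_le
        _ ≤ ∑ _w : W, DOM G := by
            apply Finset.sum_le_sum
            intro w _
            calc ((Sw w).image (fun u => (u, w))).card ≤ (Sw w).card := Finset.card_image_le
              _ = domNum _ := hSwcard w
              _ ≤ DOM G := le_DOM _ (hor w)
        _ = DOM G * Fintype.card W := by
            rw [Finset.sum_const, Finset.card_univ, smul_eq_mul, mul_comm]
    · -- DOM (G ∘ H) ≤ DOM H * |V|
      apply DOM_le
      intro D hD
      have hor : ∀ u : V, IsOrientation H (fun w w' => D (u, w) (u, w')) := by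
        intro u
        constructor
        · intro w w' h
          obtain ⟨hne, hrel⟩ := (lexAdj _ _).1 (hD.1 _ _ h)
          rcases hrel with (h | ⟨-, h⟩) | (h | ⟨-, h⟩)
          · exact absurd h G.irrefl
          · exact h
          · exact absurd h G.irrefl
          · exact h.symm
        · intro w w' h
          exact hD.2 (u, w) (u, w')
            ((lexAdj _ _).2 ⟨fun h' => h.ne (congrArg Prod.snd h'), Or.inl (Or.inr ⟨rfl, h⟩)⟩)
      choose Su hSucard hSudom using fun u => exists_min_domSet (fun w w' => D (u, w) (u, w'))
      set S : Finset (V × W) :=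
        Finset.univ.biUnion (fun u => (Su u).image (fun w => (u, w))) with hS_def
      have hSdom : IsDomSet D S := by
        rintro ⟨v, w⟩ hvw
        have hw : w ∉ Su v := fun h =>
          hvw (Finset.mem_biUnion.2 ⟨v, Finset.mem_univ v, Finset.mem_image.2 ⟨w, h, rfl⟩⟩)
        obtain ⟨w', hw', hDw⟩ := hSudom v w hw
        exact ⟨(v, w'), Finset.mem_biUnion.2 ⟨v, Finset.mem_univ v,
          Finset.mem_image.2 ⟨w', hw', rfl⟩⟩, hDw⟩
      calc domNum D ≤ S.card := domNum_le_of hSdom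
        _ ≤ ∑ u : V, ((Su u).image (fun w => (u, w))).card := Finset.card_biUnion_le
        _ ≤ ∑ _u : V, DOM H := by
            apply Finset.sum_le_sum
            intro u _
            calc ((Su u).image (fun w => (u, w))).card ≤ (Su u).card := Finset.card_image_le
              _ = domNum _ := hSucard u
              _ ≤ DOM H := le_DOM _ (hor u)
        _ = DOM H * Fintype.card V := by
            rw [Finset.sum_const, Finset.card_univ, smul_eq_mul, mul_comm]
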